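/- Let V : [0,∞) → ℝ be nonnegative and differentiable with V'(t) ≤ -a·√(V(t)) for all t, where a > 0. Then V(T) = 0 for all T ≥ 2√(V(0))/a. -/

import Mathlib

open Real

theorem stmt_19 (V : ℝ → ℝ) (a : ℝ) (ha : 0 < a)
    (hV0 : ∀ t, 0 ≤ t → 0 ≤ V t)
    (hdiff : ∀ t, 0 ≤ t → DifferentiableAt ℝ V t)
    (hineq : ∀ t, 0 ≤ t → deriv V t ≤ -a * Real.sqrt (V t)) :
    ∀ T, 2 * Real.sqrt (V 0) / a ≤ T → V T = 0 := by
  set T₀ : ℝ := 2 * Real.sqrt (V 0) / a with hT₀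
  have hT₀nn : 0 ≤ T₀ := by
    apply div_nonneg _ ha.le
    positivity
  -- V is antitone on [0, ∞)
  have hcont : ContinuousOn V (Set.Ici 0) := fun x hx => (hdiff x hx).continuousAt.continuousWithinAt
  have hanti : AntitoneOn V (Set.Ici 0) := by
    apply antitoneOn_of_deriv_nonpos (convex_Ici 0) hcont
    · intro x hx
      rw [interior_Ici] at hx
      exact ((hdiff x (le_of_lt hx)).differentiableWithinAt).differentiableAt
        (Ioi_mem_nhds hx) |>.differentiableWithinAt
    · intro x hx
      rw [interior_Ici] at hx
      have := hineq x hx.le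
      have h2 : -a * Real.sqrt (V x) ≤ 0 := by
        have : 0 ≤ Real.sqrt (V x) := Real.sqrt_nonneg _
        nlinarith
      linarith
  -- key: V T₀ = 0
  have hVT₀ : V T₀ = 0 := by
    by_cases hz : ∃ t ∈ Set.Icc (0:ℝ) T₀, V t = 0
    · obtain ⟨t, ht, hvt⟩ := hz
      have h1 : V T₀ ≤ V t := hanti ht.1 hT₀nn ht.2
      have h2 : 0 ≤ V T₀ := hV0 _ hT₀nn
      linarith
    · push_neg at hz
      have hpos : ∀ t ∈ Set.Icc (0:ℝ) T₀, 0 < V t := fun t ht =>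
        lt_of_le_of_ne (hV0 t ht.1) (Ne.symm (hz t ht))
      -- g t = sqrt (V t) + a/2 * t is antitone on Icc 0 T₀
      set g : ℝ → ℝ := fun t => Real.sqrt (V t) + a / 2 * t with hg
      have hganti : AntitoneOn g (Set.Icc 0 T₀) := by
        apply antitoneOn_of_deriv_nonpos (convex_Icc 0 T₀)
        · apply ContinuousOn.add
          · exact (hcont.mono (Set.Icc_subset_Ici_self)).sqrt
          · exact (continuous_const.mul continuous_id).continuousOn
        · intro x hx
          rw [interior_Icc] at hx
          have hx' : x ∈ Set.Icc (0:ℝ) T₀ := ⟨hx.1.le, hx.2.le⟩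
          have hd : HasDerivAt (fun t => Real.sqrt (V t))
              (1 / (2 * Real.sqrt (V x)) * deriv V x) x := by
            simpa [Function.comp_def] using
              (Real.hasDerivAt_sqrt (ne_of_gt (hpos x hx'))).comp x
                ((hdiff x hx.1.le).hasDerivAt)
          have hdg : HasDerivAt g (1 / (2 * Real.sqrt (V x)) * deriv V x + a / 2) x := by
            simpa [hg, Pi.add_def] using hd.add ((hasDerivAt_id x).const_mul (a/2))
          exact hdg.differentiableAt.differentiableWithinAt
        · intro x hx
          rw [interior_Icc] at hx
          have hx' : x ∈ Set.Icc (0:ℝ) T₀ := ⟨hx.1.le, hx.2.le⟩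
          have hvpos := hpos x hx'
          have hs : 0 < Real.sqrt (V x) := Real.sqrt_pos.mpr hvpos
          have hd : HasDerivAt (fun t => Real.sqrt (V t))
              (1 / (2 * Real.sqrt (V x)) * deriv V x) x := by
            simpa [Function.comp_def] using
              (Real.hasDerivAt_sqrt (ne_of_gt hvpos)).comp x
                ((hdiff x hx.1.le).hasDerivAt)
          have hdg : HasDerivAt g (1 / (2 * Real.sqrt (V x)) * deriv V x + a / 2) x := by
            simpa [hg, Pi.add_def] using hd.add ((hasDerivAt_id x).const_mul (a/2))
          rw [hdg.deriv]
          have h1 : deriv V x ≤ -a * Real.sqrt (V x) := hineq x hx.1.le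
          have h2 : 1 / (2 * Real.sqrt (V x)) * deriv V x ≤
              1 / (2 * Real.sqrt (V x)) * (-a * Real.sqrt (V x)) := by
            apply mul_le_mul_of_nonneg_left h1 (by positivity)
          have h3 : 1 / (2 * Real.sqrt (V x)) * (-a * Real.sqrt (V x)) = -a / 2 := by
            field_simp
          linarith [h2.trans_eq h3]
      have hkey : g T₀ ≤ g 0 := hganti ⟨le_refl 0, hT₀nn⟩ ⟨hT₀nn, le_refl _⟩ hT₀nn
      have hgl : Real.sqrt (V T₀) + a / 2 * T₀ ≤ Real.sqrt (V 0) := by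
        simpa [hg] using hkey
      have hTval : a / 2 * T₀ = Real.sqrt (V 0) := by
        rw [hT₀]; field_simp
      have hsqz : Real.sqrt (V T₀) ≤ 0 := by linarith
      have hsnn : 0 ≤ Real.sqrt (V T₀) := Real.sqrt_nonneg _
      have : Real.sqrt (V T₀) = 0 := le_antisymm hsqz hsnn
      have hvnn := hV0 T₀ hT₀nn
      nlinarith [Real.sq_sqrt hvnn]
  intro T hT
  have h1 : V T ≤ V T₀ := hanti hT₀nn (hT₀nn.trans hT) hT
  have h2 : 0 ≤ V T := hV0 T (hT₀nn.trans hT)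
  linarith
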